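/- (Lemma 3.1(v), second part) Given two admissible 2D primitive states U⁻ and U⁺ (resolved along a common normal direction) with the HLLC wave speeds s⁻ = min(s_min(U⁻), s_min(U⁺)) and s⁺ = max(s_max(U⁻), s_max(U⁺)), if s* ∈ (-1,1) satisfies the contact-discontinuity relation (1 - s⁺s*)(s*A⁻ - B⁻) = (1 - s⁻s*)(s*A⁺ - B⁺), then s⁻ < s* < s⁺. -/

import Mathlib

noncomputable section

namespace SRHD2D

/-- Lorentz factor `γ = (1 - u_n² - u_τ²)^(-1/2)`. -/
def lorentz (un ut : ℝ) : ℝ := 1 / Real.sqrt (1 - un ^ 2 - ut ^ 2)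

/-- Specific enthalpy `h = 1 + Γ p / ((Γ - 1) ρ)` of a perfect gas. -/
def enthalpy (G r p : ℝ) : ℝ := 1 + G * p / ((G - 1) * r)

/-- Sound speed `c_s = √(Γ p / (ρ h))`. -/
def soundSpeed (G r p : ℝ) : ℝ := Real.sqrt (G * p / (r * enthalpy G r p))

/-- Conserved rest-mass density `D = ρ γ`. -/
def Dc (r un ut : ℝ) : ℝ := r * lorentz un ut

/-- Normal momentum `m_n = ρ h γ² u_n`. -/
def mn (G r un ut p : ℝ) : ℝ := r * enthalpy G r p * lorentz un ut ^ 2 * un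

/-- Tangential momentum `m_τ = ρ h γ² u_τ`. -/
def mt (G r un ut p : ℝ) : ℝ := r * enthalpy G r p * lorentz un ut ^ 2 * ut

/-- Conserved total energy `E = ρ h γ² - p`. -/
def Ec (G r un ut p : ℝ) : ℝ := r * enthalpy G r p * lorentz un ut ^ 2 - p

/-- `σ_s = c_s² / (γ² (1 - c_s²))`. -/
def sigmaS (G r un ut p : ℝ) : ℝ :=
  soundSpeed G r p ^ 2 / (lorentz un ut ^ 2 * (1 - soundSpeed G r p ^ 2))

/-- Minimum normal characteristic speed. -/
def sMin (G r un ut p : ℝ) : ℝ :=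
  (un - Real.sqrt (sigmaS G r un ut p * (1 - un ^ 2 + sigmaS G r un ut p))) /
    (1 + sigmaS G r un ut p)

/-- Maximum normal characteristic speed. -/
def sMax (G r un ut p : ℝ) : ℝ :=
  (un + Real.sqrt (sigmaS G r un ut p * (1 - un ^ 2 + sigmaS G r un ut p))) /
    (1 + sigmaS G r un ut p)

lemma state_facts (G r un ut p : ℝ) (hG1 : 1 < G) (hG2 : G ≤ 2)
    (hr : 0 < r) (hu : un ^ 2 + ut ^ 2 < 1) (hp : 0 < p) :
    ∃ σ R g2 c2,
      sigmaS G r un ut p = σ ∧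
      sMin G r un ut p = (un - R)/(1+σ) ∧ sMax G r un ut p = (un + R)/(1+σ) ∧
      lorentz un ut ^ 2 = g2 ∧
      0 < σ ∧ 0 ≤ R ∧ R^2 = σ*(1-un^2+σ) ∧ 0 < c2 ∧ c2 < G - 1 ∧ c2 < 1 ∧
      1 ≤ g2*(1-un^2) ∧ 0 < g2 ∧
      σ*(1-c2) ≤ c2*(1-un^2) ∧
      G * p = (r * enthalpy G r p * g2) * (σ*(1-c2)) ∧
      0 < r * enthalpy G r p * g2 := by
  have hd : 0 < 1 - un^2 - ut^2 := by linarith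
  have hun2 : un^2 < 1 := by nlinarith [sq_nonneg ut]
  have hG0 : (0:ℝ) < G - 1 := by linarith
  have hh : 0 < enthalpy G r p := by
    have h0 : 0 < G*p/((G-1)*r) := div_pos (by positivity) (mul_pos hG0 hr)
    unfold enthalpy; linarith
  have hrh : 0 < r * enthalpy G r p := by positivity
  have hrhe : (G-1) * (r * enthalpy G r p) = (G-1)*r + G*p := by
    have h1 : (G-1)*r ≠ 0 := ne_of_gt (mul_pos hG0 hr)
    unfold enthalpy; field_simp
  obtain ⟨H, hHd⟩ : ∃ H, r * enthalpy G r p = H := ⟨_, rfl⟩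
  rw [hHd] at hrh hrhe
  obtain ⟨c2, hc2d⟩ : ∃ c2, G*p/H = c2 := ⟨_, rfl⟩
  have hc2 : soundSpeed G r p ^ 2 = c2 := by
    unfold soundSpeed
    rw [Real.sq_sqrt (by rw [hHd]; positivity), hHd, hc2d]
  have hc2H : c2 * H = G * p := by rw [← hc2d]; field_simp
  have hc2pos : 0 < c2 := by rw [← hc2d]; positivity
  have hc2G : c2 < G - 1 := by nlinarith [hrhe, hc2H, hrh, mul_pos hr hp]
  have hc2lt1 : c2 < 1 := by linarith
  obtain ⟨g2, hg2d⟩ : ∃ g2, 1/(1-un^2-ut^2) = g2 := ⟨_, rfl⟩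
  have hg2 : lorentz un ut ^ 2 = g2 := by
    unfold lorentz
    rw [div_pow, one_pow, Real.sq_sqrt hd.le, hg2d]
  have hg2pos : 0 < g2 := by rw [← hg2d]; positivity
  have hg2id : g2 * (1-un^2-ut^2) = 1 := by rw [← hg2d]; field_simp
  have hg2ge : 1 ≤ g2*(1-un^2) := by nlinarith [mul_nonneg hg2pos.le (sq_nonneg ut)]
  obtain ⟨σ, hσdd⟩ : ∃ σ, c2/(g2*(1-c2)) = σ := ⟨_, rfl⟩
  have hσd : sigmaS G r un ut p = σ := by
    unfold sigmaS; rw [hg2, hc2, hσdd]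
  have hden : (0:ℝ) < g2*(1-c2) := mul_pos hg2pos (by linarith)
  have hσpos : 0 < σ := by
    rw [← hσdd]; exact div_pos hc2pos hden
  have hσid : σ * (g2*(1-c2)) = c2 := by
    rw [← hσdd]; exact div_mul_cancel₀ _ (ne_of_gt hden)
  have hσd2 : σ*(1-c2) = c2*(1-un^2-ut^2) := by
    linear_combination (1-un^2-ut^2)*hσid - σ*(1-c2)*hg2id
  have hlink : σ*(1-c2) ≤ c2*(1-un^2) := by nlinarith [mul_nonneg hc2pos.le (sq_nonneg ut)]
  have hGp : G * p = (H * g2) * (σ*(1-c2)) := by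
    rw [hσd2]
    linear_combination (-1:ℝ)*hc2H - c2*H*hg2id
  refine ⟨σ, Real.sqrt (σ*(1-un^2+σ)), g2, c2, hσd, ?_, ?_, hg2, hσpos,
    Real.sqrt_nonneg _, Real.sq_sqrt (mul_pos hσpos (by nlinarith : (0:ℝ) < 1-un^2+σ)).le, hc2pos, hc2G, hc2lt1,
    hg2ge, hg2pos, hlink, by rw [hHd]; exact hGp, by rw [hHd]; positivity⟩
  · unfold sMin; rw [hσd]
  · unfold sMax; rw [hσd]
lemma corner_core (u σ c2 R : ℝ) (hu2 : u^2 < 1) (hσ : 0 < σ)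
    (hc0 : 0 < c2) (hc1 : c2 < 1)
    (hlink : σ*(1-c2) ≤ c2*(1-u^2)) (hR0 : 0 ≤ R) (hR : R^2 = σ*(1-u^2+σ)) :
    σ*(1-c2)*(1+σ-u+R) ≤ (1+c2)*(1-u)*(u*σ+R) := by
  have hu1 : u < 1 := by nlinarith
  have hu1' : -1 < u := by nlinarith
  have hcu : 0 < 1 - c2*u := by nlinarith
  set α := (1+c2)*(1-u) - σ*(1-c2) with hαdef
  set β := (1+c2)*(1-u)*u*σ - σ*(1-c2)*(1+σ-u) with hβdef
  have hα : 0 < α := by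
    have h1 : 0 < (1-u)*(1-c2*u) := mul_pos (by linarith) hcu
    have : α = (1-u)*(1-c2*u) + (c2*(1-u^2) - σ*(1-c2)) := by rw [hαdef]; ring
    rw [this]; linarith
  have hkey : α^2*R^2 - β^2
      = σ*(1+σ)*(1-u)^2*((1+c2)^2*(1-u^2) - σ*(1-c2)*(3+c2)) := by
    rw [hR, hαdef, hβdef]; ring
  have hbr : 0 ≤ (1+c2)^2*(1-u^2) - σ*(1-c2)*(3+c2) := by
    nlinarith [mul_le_mul_of_nonneg_right hlink (by linarith : (0:ℝ) ≤ 3+c2)]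
  have hsq : β^2 ≤ α^2*R^2 := by
    have h1 : 0 ≤ σ*(1+σ)*(1-u)^2*((1+c2)^2*(1-u^2) - σ*(1-c2)*(3+c2)) := by positivity
    linarith
  have hαR : 0 ≤ α*R := mul_nonneg hα.le hR0
  have e2 : α*R + β = (1+c2)*(1-u)*(u*σ+R) - σ*(1-c2)*(1+σ-u+R) := by
    rw [hαdef, hβdef]; ring
  clear_value α β
  have hfin : 0 ≤ α*R + β := by
    by_contra hneg
    push_neg at hneg
    have h3 : 0 < α*R - β := by linarith
    have h4 := mul_neg_of_neg_of_pos hneg h3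
    have e : (α*R+β)*(α*R-β) = α^2*R^2 - β^2 := by ring
    linarith
  linarith [hfin, e2]

lemma gcancel {G a b : ℝ} (hG : 0 < G) (h : G*a ≤ G*b) : a ≤ b :=
  le_of_mul_le_mul_left h hG

set_option maxHeartbeats 1000000 in
lemma key (G r un ut p t s : ℝ) (hG1 : 1 < G) (hG2 : G ≤ 2)
    (hr : 0 < r) (hu : un ^ 2 + ut ^ 2 < 1) (hp : 0 < p)
    (ht1 : sMax G r un ut p ≤ t) (ht2 : t ≤ 1)
    (hs1 : -1 ≤ s) (hs2 : s ≤ sMin G r un ut p) :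
    p*(1-t*s) ≤ r * enthalpy G r p * lorentz un ut ^ 2 * ((t-un)*(un-s)) := by
  obtain ⟨σ, R, g2, c2, hσd, hsmin, hsmax, hg2, hσpos, hR0, hR2, hc2pos, hc2G,
    hc2lt1, hg2ge, hg2pos, hlink, hGp, hWpos⟩ := state_facts G r un ut p hG1 hG2 hr hu hp
  rw [hg2]
  obtain ⟨W, hWd⟩ : ∃ W, r * enthalpy G r p * g2 = W := ⟨_, rfl⟩
  rw [hWd] at hWpos hGp ⊢
  have hG0 : (0:ℝ) < G := by linarith
  have hun2 : un^2 < 1 := by nlinarith [sq_nonneg ut]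
  have hun1 : un < 1 := by nlinarith
  have hun1' : -1 < un := by nlinarith
  have hK : (0:ℝ) < 1 + σ := by linarith
  -- R bounds
  have hRlt1 : R < 1 + σ - un := by
    have e : (1+σ-un)^2 - R^2 = (1+σ)*(1-un)^2 := by linear_combination -hR2
    have h1 : R^2 < (1+σ-un)^2 := by
      linarith [mul_pos hK (pow_pos (show (0:ℝ) < 1-un by linarith) 2)]
    exact lt_of_pow_lt_pow_left₀ 2 (by linarith) h1
  have hRlt2 : R < 1 + σ + un := by
    have e : (1+σ+un)^2 - R^2 = (1+σ)*(1+un)^2 := by linear_combination -hR2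
    have h1 : R^2 < (1+σ+un)^2 := by
      linarith [mul_pos hK (pow_pos (show (0:ℝ) < 1+un by linarith) 2)]
    exact lt_of_pow_lt_pow_left₀ 2 (by linarith) h1
  have hRabs : |un*σ| < R := by
    have e : R^2 - (un*σ)^2 = σ*(1-un^2)*(1+σ) := by linear_combination hR2
    have h1 : |un*σ|^2 < R^2 := by
      rw [sq_abs]
      linarith [mul_pos (mul_pos hσpos (show (0:ℝ) < 1-un^2 by linarith)) hK]
    exact lt_of_pow_lt_pow_left₀ 2 hR0 h1
  have hRgt1 : un*σ < R := lt_of_le_of_lt (le_abs_self _) hRabs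
  have hRgt2 : -(un*σ) < R := lt_of_le_of_lt (neg_le_abs _) hRabs
  -- t, s bounds
  have ht1' : un + R ≤ (1+σ)*t := by
    rw [hsmax, div_le_iff₀ hK] at ht1; linarith [ht1]
  have hs2' : (1+σ)*s ≤ un - R := by
    rw [hsmin, le_div_iff₀ hK] at hs2; linarith [hs2]
  have h1c2G : 1 + c2 ≤ G := by linarith
  have hWun : (0:ℝ) ≤ W*(1-un^2) := by
    have : (0:ℝ) < 1-un^2 := by linarith
    positivity
  have hc4 : 2*p ≤ W*(1-un^2) := by
    apply gcancel hG0
    calc G*(2*p) = W*(2*(σ*(1-c2))) := by linear_combination 2*hGp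
      _ ≤ W*(2*(c2*(1-un^2))) := by
          apply mul_le_mul_of_nonneg_left (by linarith) hWpos.le
      _ = (2*c2)*(W*(1-un^2)) := by ring
      _ ≤ G*(W*(1-un^2)) := by
          apply mul_le_mul_of_nonneg_right (by linarith) hWun
  have hc1core : p*(1+2*σ-un^2) ≤ W*(σ*(1-un^2)) := by
    have h1 : (1-c2)*(1+2*σ-un^2) ≤ G*(1-un^2) := by
      linarith [hlink, mul_le_mul_of_nonneg_right h1c2G (show (0:ℝ) ≤ 1-un^2 by linarith)]
    apply gcancel hG0
    calc G*(p*(1+2*σ-un^2)) = W*σ*((1-c2)*(1+2*σ-un^2)) := by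
          linear_combination (1+2*σ-un^2)*hGp
      _ ≤ W*σ*(G*(1-un^2)) := by
          apply mul_le_mul_of_nonneg_left h1 (mul_pos hWpos hσpos).le
      _ = G*(W*(σ*(1-un^2))) := by ring
  have hc1 : p*((1+σ)^2 - un^2 + R^2) ≤ W*((R-un*σ)*(un*σ+R)) := by
    have e1 : (1+σ)^2 - un^2 + R^2 = (1+σ)*(1+2*σ-un^2) := by linear_combination hR2
    have e2 : (R-un*σ)*(un*σ+R) = (1+σ)*(σ*(1-un^2)) := by linear_combination hR2
    rw [e1, e2]
    calc p*((1+σ)*(1+2*σ-un^2)) = (1+σ)*(p*(1+2*σ-un^2)) := by ring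
      _ ≤ (1+σ)*(W*(σ*(1-un^2))) := by
          apply mul_le_mul_of_nonneg_left hc1core hK.le
      _ = W*((1+σ)*(σ*(1-un^2))) := by ring
  have hc2c : p*(1+σ-un+R) ≤ W*((1-un)*(un*σ+R)) := by
    have hcc := corner_core un σ c2 R hun2 hσpos hc2pos hc2lt1 hlink hR0 hR2
    have hnn : (0:ℝ) ≤ (1-un)*(un*σ+R) := by
      apply mul_nonneg (by linarith) (by linarith)
    apply gcancel hG0
    calc G*(p*(1+σ-un+R)) = W*(σ*(1-c2)*(1+σ-un+R)) := by
          linear_combination (1+σ-un+R)*hGp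
      _ ≤ W*((1+c2)*(1-un)*(un*σ+R)) := by
          apply mul_le_mul_of_nonneg_left hcc hWpos.le
      _ = (1+c2)*((1-un)*(un*σ+R))*W := by ring
      _ ≤ G*((1-un)*(un*σ+R))*W := by
          apply mul_le_mul_of_nonneg_right
            (mul_le_mul_of_nonneg_right h1c2G hnn) hWpos.le
      _ = G*(W*((1-un)*(un*σ+R))) := by ring
  have hc3c : p*(1+σ+un+R) ≤ W*((R-un*σ)*(1+un)) := by
    have hcc := corner_core (-un) σ c2 R (by nlinarith) hσpos hc2pos hc2lt1
      (by nlinarith [hlink]) hR0 (by nlinarith [hR2])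
    have hnn : (0:ℝ) ≤ (1+un)*(R-un*σ) := by
      apply mul_nonneg (by linarith) (by linarith)
    apply gcancel hG0
    calc G*(p*(1+σ+un+R)) = W*(σ*(1-c2)*(1+σ-(-un)+R)) := by
          linear_combination (1+σ+un+R)*hGp
      _ ≤ W*((1+c2)*(1-(-un))*((-un)*σ+R)) := by
          apply mul_le_mul_of_nonneg_left hcc hWpos.le
      _ = (1+c2)*((1+un)*(R-un*σ))*W := by ring
      _ ≤ G*((1+un)*(R-un*σ))*W := by
          apply mul_le_mul_of_nonneg_right
            (mul_le_mul_of_nonneg_right h1c2G hnn) hWpos.le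
      _ = G*(W*((R-un*σ)*(1+un))) := by ring
  -- bilinear interpolation
  have hKL1 : (0:ℝ) < (1+σ) - (un+R) := by linarith
  have hKL2 : (0:ℝ) < (un-R) + (1+σ) := by linarith
  have hw1 : (0:ℝ) ≤ 1 - t := by linarith
  have hw2 : (0:ℝ) ≤ (un-R) - (1+σ)*s := by linarith
  have hw3 : (0:ℝ) ≤ s + 1 := by linarith
  have hw4 : (0:ℝ) ≤ (1+σ)*t - (un+R) := by linarith
  have hd3 : (0:ℝ) ≤ W*((R-un*σ)*(1+un)) - p*(1+σ+un+R) := by linarith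
  have hd1 : (0:ℝ) ≤ W*((R-un*σ)*(un*σ+R)) - p*((1+σ)^2 - un^2 + R^2) := by linarith
  have hd4 : (0:ℝ) ≤ W*(1-un^2) - 2*p := by linarith
  have hd2 : (0:ℝ) ≤ W*((1-un)*(un*σ+R)) - p*(1+σ-un+R) := by linarith
  have hsum : (0:ℝ) ≤
      (W*((R-un*σ)*(1+un)) - p*(1+σ+un+R))*((1-t)*((un-R) - (1+σ)*s))
      + (W*((R-un*σ)*(un*σ+R)) - p*((1+σ)^2 - un^2 + R^2))*((1-t)*(s+1))
      + (W*(1-un^2) - 2*p)*(((1+σ)*t - (un+R))*((un-R) - (1+σ)*s))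
      + (W*((1-un)*(un*σ+R)) - p*(1+σ-un+R))*(((1+σ)*t - (un+R))*(s+1)) := by
    have m1 := mul_nonneg hd3 (mul_nonneg hw1 hw2)
    have m2 := mul_nonneg hd1 (mul_nonneg hw1 hw3)
    have m3 := mul_nonneg hd4 (mul_nonneg hw4 hw2)
    have m4 := mul_nonneg hd2 (mul_nonneg hw4 hw3)
    linarith
  have hid : ((1+σ) - (un+R))*((un-R) + (1+σ)) * (W*((t-un)*(un-s)) - p*(1-t*s))
      = (W*((R-un*σ)*(1+un)) - p*(1+σ+un+R))*((1-t)*((un-R) - (1+σ)*s))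
      + (W*((R-un*σ)*(un*σ+R)) - p*((1+σ)^2 - un^2 + R^2))*((1-t)*(s+1))
      + (W*(1-un^2) - 2*p)*(((1+σ)*t - (un+R))*((un-R) - (1+σ)*s))
      + (W*((1-un)*(un*σ+R)) - p*(1+σ-un+R))*(((1+σ)*t - (un+R))*(s+1)) := by
    ring
  have hC : (0:ℝ) < ((1+σ) - (un+R))*((un-R) + (1+σ)) := mul_pos hKL1 hKL2
  have h0 : (0:ℝ) ≤ ((1+σ) - (un+R))*((un-R) + (1+σ)) * (W*((t-un)*(un-s)) - p*(1-t*s)) := by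
    rw [hid]; exact hsum
  have hf : (0:ℝ) ≤ W*((t-un)*(un-s)) - p*(1-t*s) := by
    rcases lt_or_ge (W*((t-un)*(un-s)) - p*(1-t*s)) 0 with h|h
    · exfalso
      have h2 := mul_pos hC (neg_pos.mpr h)
      have e : ((1+σ) - (un+R))*((un-R) + (1+σ)) * (-(W*((t-un)*(un-s)) - p*(1-t*s)))
          = -(((1+σ) - (un+R))*((un-R) + (1+σ)) * (W*((t-un)*(un-s)) - p*(1-t*s))) := by ring
      rw [e] at h2
      linarith
    · exact h
  linarith


lemma state_bounds (G r un ut p : ℝ) (hG1 : 1 < G) (hG2 : G ≤ 2)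
    (hr : 0 < r) (hu : un ^ 2 + ut ^ 2 < 1) (hp : 0 < p) :
    -1 < sMin G r un ut p ∧ sMin G r un ut p < un ∧
      un < sMax G r un ut p ∧ sMax G r un ut p < 1 := by
  obtain ⟨σ, R, g2, c2, hσd, hsmin, hsmax, hg2, hσpos, hR0, hR2, hc2pos, hc2G,
    hc2lt1, hg2ge, hg2pos, hlink, hGp, hWpos⟩ := state_facts G r un ut p hG1 hG2 hr hu hp
  have hun2 : un^2 < 1 := by nlinarith [sq_nonneg ut]
  have hun1 : un < 1 := by nlinarith
  have hun1' : -1 < un := by nlinarith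
  have hK : (0:ℝ) < 1 + σ := by linarith
  have hRlt1 : R < 1 + σ - un := by
    have e : (1+σ-un)^2 - R^2 = (1+σ)*(1-un)^2 := by linear_combination -hR2
    have h1 : R^2 < (1+σ-un)^2 := by
      linarith [mul_pos hK (pow_pos (show (0:ℝ) < 1-un by linarith) 2)]
    exact lt_of_pow_lt_pow_left₀ 2 (by linarith) h1
  have hRlt2 : R < 1 + σ + un := by
    have e : (1+σ+un)^2 - R^2 = (1+σ)*(1+un)^2 := by linear_combination -hR2
    have h1 : R^2 < (1+σ+un)^2 := by
      linarith [mul_pos hK (pow_pos (show (0:ℝ) < 1+un by linarith) 2)]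
    exact lt_of_pow_lt_pow_left₀ 2 (by linarith) h1
  have hRabs : |un*σ| < R := by
    have e : R^2 - (un*σ)^2 = σ*(1-un^2)*(1+σ) := by linear_combination hR2
    have h1 : |un*σ|^2 < R^2 := by
      rw [sq_abs]
      linarith [mul_pos (mul_pos hσpos (show (0:ℝ) < 1-un^2 by linarith)) hK]
    exact lt_of_pow_lt_pow_left₀ 2 hR0 h1
  have hRgt1 : un*σ < R := lt_of_le_of_lt (le_abs_self _) hRabs
  have hRgt2 : -(un*σ) < R := lt_of_le_of_lt (neg_le_abs _) hRabs
  rw [hsmin, hsmax]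
  refine ⟨?_, ?_, ?_, ?_⟩
  · rw [lt_div_iff₀ hK]; linarith
  · rw [div_lt_iff₀ hK]; nlinarith
  · rw [lt_div_iff₀ hK]; nlinarith
  · rw [div_lt_iff₀ hK]; linarith

lemma one_sub_mul_pos {a b : ℝ} (h1 : -1 < a) (h2 : a < 1) (h3 : -1 < b) (h4 : b < 1) :
    0 < 1 - a*b := by nlinarith

lemma W_pos (G r un ut p : ℝ) (hG1 : 1 < G)
    (hr : 0 < r) (hu : un ^ 2 + ut ^ 2 < 1) (hp : 0 < p) :
    0 < r * enthalpy G r p * lorentz un ut ^ 2 := by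
  have hd : 0 < 1 - un^2 - ut^2 := by linarith
  have hG0 : (0:ℝ) < G - 1 := by linarith
  have hh : 0 < enthalpy G r p := by
    have h0 : 0 < G*p/((G-1)*r) := div_pos (by positivity) (mul_pos hG0 hr)
    unfold enthalpy; linarith
  have hg2 : lorentz un ut ^ 2 = 1/(1-un^2-ut^2) := by
    unfold lorentz
    rw [div_pow, one_pow, Real.sq_sqrt hd.le]
  rw [hg2]
  positivity

set_option maxHeartbeats 1000000 in
theorem hllc2d_contact_speed_bounds (G r1 un1 ut1 p1 r2 un2 ut2 p2 sm sp A1 A2 B1 B2 sstar : ℝ)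
    (hG1 : 1 < G) (hG2 : G ≤ 2)
    (hr1 : 0 < r1) (hu1 : un1 ^ 2 + ut1 ^ 2 < 1) (hp1 : 0 < p1)
    (hr2 : 0 < r2) (hu2 : un2 ^ 2 + ut2 ^ 2 < 1) (hp2 : 0 < p2)
    (hsm : sm = min (sMin G r1 un1 ut1 p1) (sMin G r2 un2 ut2 p2))
    (hsp : sp = max (sMax G r1 un1 ut1 p1) (sMax G r2 un2 ut2 p2))
    (hA1 : A1 = sm * Ec G r1 un1 ut1 p1 - mn G r1 un1 ut1 p1)
    (hA2 : A2 = sp * Ec G r2 un2 ut2 p2 - mn G r2 un2 ut2 p2)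
    (hB1 : B1 = mn G r1 un1 ut1 p1 * (sm - un1) - p1)
    (hB2 : B2 = mn G r2 un2 ut2 p2 * (sp - un2) - p2)
    (hs1 : -1 < sstar) (hs2 : sstar < 1)
    (hrel : (1 - sp * sstar) * (sstar * A1 - B1) = (1 - sm * sstar) * (sstar * A2 - B2))
    :
    sm < sstar ∧ sstar < sp := by
  obtain ⟨hb1a, hb1b, hb1c, hb1d⟩ := state_bounds G r1 un1 ut1 p1 hG1 hG2 hr1 hu1 hp1
  obtain ⟨hb2a, hb2b, hb2c, hb2d⟩ := state_bounds G r2 un2 ut2 p2 hG1 hG2 hr2 hu2 hp2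
  have hun11 : un1 < 1 := by nlinarith [sq_nonneg ut1]
  have hun11' : -1 < un1 := by nlinarith [sq_nonneg ut1]
  have hun21 : un2 < 1 := by nlinarith [sq_nonneg ut2]
  have hun21' : -1 < un2 := by nlinarith [sq_nonneg ut2]
  have hsm1 : sm ≤ sMin G r1 un1 ut1 p1 := hsm ▸ min_le_left _ _
  have hsm2 : sm ≤ sMin G r2 un2 ut2 p2 := hsm ▸ min_le_right _ _
  have hsp1 : sMax G r1 un1 ut1 p1 ≤ sp := hsp ▸ le_max_left _ _
  have hsp2 : sMax G r2 un2 ut2 p2 ≤ sp := hsp ▸ le_max_right _ _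
  have hsmg : -1 < sm := by rw [hsm]; exact lt_min hb1a hb2a
  have hsml1 : sm < un1 := lt_of_le_of_lt hsm1 hb1b
  have hsml2 : sm < un2 := lt_of_le_of_lt hsm2 hb2b
  have hsml : sm < 1 := by linarith
  have hspl : sp < 1 := by rw [hsp]; exact max_lt hb1d hb2d
  have hspg1 : un1 < sp := lt_of_lt_of_le hb1c hsp1
  have hspg2 : un2 < sp := lt_of_lt_of_le hb2c hsp2
  have hspg : -1 < sp := by linarith
  -- rewrite hrel in terms of W1, W2
  rw [hA1, hA2, hB1, hB2] at hrel
  simp only [Ec, mn] at hrel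
  have hW1 : 0 < r1 * enthalpy G r1 p1 * lorentz un1 ut1 ^ 2 :=
    W_pos G r1 un1 ut1 p1 hG1 hr1 hu1 hp1
  have hW2 : 0 < r2 * enthalpy G r2 p2 * lorentz un2 ut2 ^ 2 :=
    W_pos G r2 un2 ut2 p2 hG1 hr2 hu2 hp2
  obtain ⟨W1, hW1d⟩ : ∃ w, r1 * enthalpy G r1 p1 * lorentz un1 ut1 ^ 2 = w := ⟨_, rfl⟩
  obtain ⟨W2, hW2d⟩ : ∃ w, r2 * enthalpy G r2 p2 * lorentz un2 ut2 ^ 2 = w := ⟨_, rfl⟩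
  rw [hW1d] at hrel hW1
  rw [hW2d] at hrel hW2
  have hrel2 : (1-sp*sstar)*(W1*((sm-un1)*(sstar-un1)) + p1*(1-sm*sstar))
      = (1-sm*sstar)*(W2*((sp-un2)*(sstar-un2)) + p2*(1-sp*sstar)) := by
    linear_combination hrel
  clear hrel hA1 hA2 hB1 hB2 hsm hsp
  have h2 : 0 < 1 - sm*sstar := one_sub_mul_pos hsmg hsml hs1 hs2
  have h1 : 0 < 1 - sp*sstar := one_sub_mul_pos hspg hspl hs1 hs2
  constructor
  · by_contra hcon
    push_neg at hcon   -- sstar ≤ sm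
    have hkey := key G r2 un2 ut2 p2 sp sstar hG1 hG2 hr2 hu2 hp2
      hsp2 hspl.le hs1.le (le_trans hcon hsm2)
    rw [hW2d] at hkey
    have hT2 : W2*((sp-un2)*(sstar-un2)) + p2*(1-sp*sstar) ≤ 0 := by
      have e : W2*((sp-un2)*(sstar-un2)) = -(W2*((sp-un2)*(un2-sstar))) := by ring
      linarith [hkey, e.le, e.ge]
    have hT1 : 0 < W1*((sm-un1)*(sstar-un1)) + p1*(1-sm*sstar) := by
      have m1 : 0 < (sm-un1)*(sstar-un1) :=
        mul_pos_of_neg_of_neg (by linarith) (by linarith)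
      exact add_pos (mul_pos hW1 m1) (mul_pos hp1 h2)
    have hL : 0 < (1-sp*sstar)*(W1*((sm-un1)*(sstar-un1)) + p1*(1-sm*sstar)) :=
      mul_pos h1 hT1
    have hRle : (1-sm*sstar)*(W2*((sp-un2)*(sstar-un2)) + p2*(1-sp*sstar)) ≤ 0 :=
      mul_nonpos_of_nonneg_of_nonpos h2.le hT2
    linarith
  · by_contra hcon
    push_neg at hcon   -- sp ≤ sstar
    have hkey := key G r1 un1 ut1 p1 sstar sm hG1 hG2 hr1 hu1 hp1
      (le_trans hsp1 hcon) hs2.le hsmg.le hsm1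
    rw [hW1d] at hkey
    have hT1 : W1*((sm-un1)*(sstar-un1)) + p1*(1-sm*sstar) ≤ 0 := by
      have e : W1*((sm-un1)*(sstar-un1)) = -(W1*((sstar-un1)*(un1-sm))) := by ring
      have e2 : p1*(1-sstar*sm) = p1*(1-sm*sstar) := by ring
      linarith [hkey, e.le, e.ge, e2.le, e2.ge]
    have hT2 : 0 < W2*((sp-un2)*(sstar-un2)) + p2*(1-sp*sstar) := by
      have m1 : 0 < (sp-un2)*(sstar-un2) :=
        mul_pos (by linarith) (by linarith)
      exact add_pos (mul_pos hW2 m1) (mul_pos hp2 h1)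
    have hL : (1-sp*sstar)*(W1*((sm-un1)*(sstar-un1)) + p1*(1-sm*sstar)) ≤ 0 :=
      mul_nonpos_of_nonneg_of_nonpos h1.le hT1
    have hRgt : 0 < (1-sm*sstar)*(W2*((sp-un2)*(sstar-un2)) + p2*(1-sp*sstar)) :=
      mul_pos h2 hT2
    linarith


end SRHD2D
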